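/- Let X be a set, let E ⊆ X × X satisfy bounded geometry (there is M ∈ ℕ such that for every x ∈ X, |{y : (x,y) ∈ E ∪ E⁻¹}| ≤ M), let A, B ⊆ X, let t : A → B be a bijection, and let n ≥ 1 be such that {(t(x), x) : x ∈ A} ⊆ E^{∘n}. Then there exist m ≥ 1 and a partition A = A₁ ⊔ ⋯ ⊔ A_m such that for each i = 1, …, m there are partial bijections s_i^1, …, s_i^n (each a bijection between two subsets of X) with: (a) the domain of s_i^1 is A_i and for every x ∈ A_i, t(x) = s_i^n(s_i^{n−1}(⋯ s_i^1(x) ⋯)); (b) for every j and every x in the domain of s_i^j, (s_i^j(x), x) ∈ E; (c) for every j = 1, …, n−1, the range of s_i^j equals the domain of s_i^{j+1}; (d) each s_i^j is either the identity map of its domain, or its range is disjoint from its domain. -/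

import Mathlib

/-- The inverse of a relation `E ⊆ X × X`. -/
def relInv {X : Type*} (E : Set (X × X)) : Set (X × X) := {p | (p.2, p.1) ∈ E}

/-- Composition of relations: `E ∘ F = {(x,y) : ∃ z, (x,z) ∈ E ∧ (z,y) ∈ F}`. -/
def relComp {X : Type*} (E F : Set (X × X)) : Set (X × X) :=
  {p | ∃ z, (p.1, z) ∈ E ∧ (z, p.2) ∈ F}

/-- Iterated composition `E^{∘n}`; by convention `E^{∘0}` is the diagonal, so that
`E^{∘1} = E`. -/
def relPow {X : Type*} (E : Set (X × X)) : ℕ → Set (X × X)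
  | 0 => {p | p.1 = p.2}
  | n + 1 => relComp E (relPow E n)

namespace Stmt2Aux
variable {X : Type*}

def nbr (E : Set (X × X)) (x : X) : Set X := {y | (x, y) ∈ E ∪ relInv E}

lemma nbr_symm {E : Set (X × X)} {x y : X} (h : y ∈ nbr E x) : x ∈ nbr E y := by
  rcases h with h | h
  · exact Or.inr h
  · exact Or.inl h

def ball (E : Set (X × X)) : ℕ → X → Set X
  | 0, x => {x}
  | r+1, x => ball E r x ∪ ⋃ y ∈ ball E r x, nbr E y

lemma mem_ball_self (E : Set (X × X)) (r : ℕ) (x : X) : x ∈ ball E r x := by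
  induction r with
  | zero => exact rfl
  | succ r ih => exact Or.inl ih

lemma ball_mono_succ (E : Set (X × X)) (r : ℕ) (x : X) : ball E r x ⊆ ball E (r+1) x :=
  fun _ h => Or.inl h

lemma ball_mono (E : Set (X × X)) {r s : ℕ} (h : r ≤ s) (x : X) : ball E r x ⊆ ball E s x := by
  induction s with
  | zero => simpa [Nat.le_zero.mp h] using subset_rfl
  | succ s ih =>
    rcases Nat.lt_or_ge r (s+1) with h' | h'
    · exact (ih (Nat.lt_succ_iff.mp h')).trans (ball_mono_succ E s x)
    · have : r = s + 1 := le_antisymm h h'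
      simp [this]

lemma mem_ball_step {E : Set (X × X)} {r : ℕ} {x y z : X} (hy : y ∈ ball E r x)
    (hz : z ∈ nbr E y) : z ∈ ball E (r+1) x :=
  Or.inr (Set.mem_biUnion hy hz)

lemma ball_trans {E : Set (X × X)} {r s : ℕ} {x y : X} (hy : y ∈ ball E r x) :
    ball E s y ⊆ ball E (r + s) x := by
  induction s with
  | zero => intro z hz; rcases hz with rfl; simpa using hy
  | succ s ih =>
    intro z hz
    rcases hz with hz | hz
    · exact ball_mono E (Nat.le_succ _) x (ih hz)
    · rcases Set.mem_iUnion₂.mp hz with ⟨w, hw, hzw⟩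
      exact mem_ball_step (ih hw) hzw

lemma ball_symm {E : Set (X × X)} {r : ℕ} {x y : X} (h : y ∈ ball E r x) : x ∈ ball E r y := by
  induction r generalizing x y with
  | zero => rcases h with rfl; exact rfl
  | succ r ih =>
    rcases h with h | h
    · exact ball_mono_succ E r y (ih h)
    · rcases Set.mem_iUnion₂.mp h with ⟨w, hw, hyw⟩
      have hx : x ∈ ball E r w := ih hw
      have : w ∈ ball E 1 y := Or.inr (Set.mem_biUnion (mem_ball_self E 0 y) (nbr_symm hyw))
      have := ball_trans this hx
      simpa [Nat.add_comm] using this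

lemma ncard_biUnion_le {S : Set X} {f : X → Set X} (hS : S.Finite) {b : ℕ}
    (hfin : ∀ y ∈ S, (f y).Finite) (hb : ∀ y ∈ S, (f y).ncard ≤ b) :
    (⋃ y ∈ S, f y).Finite ∧ (⋃ y ∈ S, f y).ncard ≤ S.ncard * b := by
  induction S, hS using Set.Finite.induction_on with
  | empty => simp
  | @insert z S hz hSfin ih =>
    have h1 : (⋃ y ∈ insert z S, f y) = f z ∪ ⋃ y ∈ S, f y := by
      simp [Set.biUnion_insert]
    obtain ⟨ihfin, ihcard⟩ := ih (fun y hy => hfin y (Set.mem_insert_of_mem z hy))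
      (fun y hy => hb y (Set.mem_insert_of_mem z hy))
    have hfz : (f z).Finite := hfin z (Set.mem_insert z S)
    constructor
    · rw [h1]; exact hfz.union ihfin
    · rw [h1, Set.ncard_insert_of_notMem hz hSfin]
      calc (f z ∪ ⋃ y ∈ S, f y).ncard ≤ (f z).ncard + (⋃ y ∈ S, f y).ncard :=
            Set.ncard_union_le _ _
        _ ≤ b + S.ncard * b := Nat.add_le_add (hb z (Set.mem_insert z S)) ihcard
        _ = (S.ncard + 1) * b := by ring

lemma ball_finite_card {E : Set (X × X)} {M : ℕ}
    (hbg : ∀ x : X, (nbr E x).Finite ∧ (nbr E x).ncard ≤ M) (r : ℕ) (x : X) :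
    (ball E r x).Finite ∧ (ball E r x).ncard ≤ (M+1)^r := by
  induction r with
  | zero => simp [ball]
  | succ r ih =>
    have hsub : ball E (r+1) x ⊆ ⋃ y ∈ ball E r x, ({y} ∪ nbr E y) := by
      intro z hz
      rcases hz with hz | hz
      · exact Set.mem_biUnion hz (Or.inl rfl)
      · rcases Set.mem_iUnion₂.mp hz with ⟨w, hw, hzw⟩
        exact Set.mem_biUnion hw (Or.inr hzw)
    obtain ⟨hufin, hucard⟩ := ncard_biUnion_le ih.1
      (fun y _ => (Set.finite_singleton y).union (hbg y).1)
      (fun y _ => le_trans (Set.ncard_union_le _ _)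
        (by simpa [Nat.add_comm] using Nat.add_le_add_left (hbg y).2 1))
    refine ⟨hufin.subset hsub, ?_⟩
    calc (ball E (r+1) x).ncard ≤ _ := Set.ncard_le_ncard hsub hufin
      _ ≤ (ball E r x).ncard * (M+1) := hucard
      _ ≤ (M+1)^r * (M+1) := Nat.mul_le_mul_right _ ih.2
      _ = (M+1)^(r+1) := by ring


lemma exists_avoid {K : ℕ} (f : X → Fin (K+1)) (S : Set X) (hS : S.Finite) (hK : S.ncard ≤ K) :
    ∃ i : Fin (K+1), i ∉ f '' S := by
  by_contra h
  push_neg at h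
  have h1 : f '' S = Set.univ := Set.eq_univ_of_forall h
  have h2 : (f '' S).ncard ≤ K := le_trans (Set.ncard_image_le hS) hK
  rw [h1, Set.ncard_univ] at h2
  simp [Nat.card_eq_fintype_card] at h2

lemma exists_coloring (K : ℕ) (N : X → Set X)
    (hsym : ∀ x y, y ∈ N x → x ∈ N y)
    (hfin : ∀ x, (N x).Finite) (hcard : ∀ x, (N x).ncard ≤ K) :
    ∃ c : X → Fin (K+1), ∀ x y, y ∈ N x → x ≠ y → c x ≠ c y := by
  classical
  have wf : WellFounded (WellOrderingRel (α := X)) := IsWellFounded.wf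
  set F : ∀ x : X, (∀ x', WellOrderingRel x' x → Fin (K+1)) → Fin (K+1) :=
    fun x ih => Classical.choose (exists_avoid
      (fun x' => if h : WellOrderingRel x' x then ih x' h else 0) (N x) (hfin x) (hcard x))
    with hF
  set c : X → Fin (K+1) := WellFounded.fix wf F with hc
  have hfix : ∀ x, c x = F x (fun x' _ => c x') := fun x => WellFounded.fix_eq wf F x
  have key : ∀ x x', WellOrderingRel x' x → x' ∈ N x → c x ≠ c x' := by
    intro x x' hlt hmem
    have hspec := Classical.choose_spec (exists_avoid
      (fun y => if h : WellOrderingRel y x then c y else 0) (N x) (hfin x) (hcard x))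
    have hx : c x ∉ (fun y => if h : WellOrderingRel y x then c y else 0) '' (N x) := by
      rw [hfix x]; exact hspec
    intro he
    apply hx
    refine ⟨x', hmem, ?_⟩
    simp [hlt, he.symm]
  refine ⟨c, ?_⟩
  intro x y hmem hne
  rcases trichotomous_of WellOrderingRel x y with h | h | h
  · exact (key y x h (hsym x y hmem)).symm
  · exact absurd h hne
  · exact key x y h hmem

lemma relPow_path {E : Set (X × X)} : ∀ {n : ℕ} {a b : X}, (a, b) ∈ relPow E n →
    ∃ q : ℕ → X, q 0 = b ∧ q n = a ∧ ∀ k < n, (q (k+1), q k) ∈ E := by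
  intro n
  induction n with
  | zero =>
    intro a b h
    have hab : a = b := h
    exact ⟨fun _ => b, rfl, hab.symm, by omega⟩
  | succ n ih =>
    intro a b h
    obtain ⟨z, haz, hzb⟩ := h
    obtain ⟨q, hq0, hqn, hstep⟩ := ih hzb
    refine ⟨fun k => if k ≤ n then q k else a, by simp [hq0], by simp, ?_⟩
    intro k hk
    rcases Nat.lt_or_ge k n with h' | h'
    · have h1 : k + 1 ≤ n := h'
      have h2 : k ≤ n := by omega
      simpa [h1, h2] using hstep k h'
    · have hkn : k = n := by omega
      subst hkn
      simpa [hqn] using haz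

end Stmt2Aux


/-- If `E` has bounded geometry, `t : A → B` is a bijection and the graph
`{(t x, x) : x ∈ A}` is contained in `E^{∘n}` (`n ≥ 1`), then `A` can be partitioned into
finitely many pieces `A₁, …, A_m` on each of which `t` factors as a composition of `n`
partial bijections `s_i^1, …, s_i^n` with graphs contained in `E`, consecutive ranges
matching domains, and each `s_i^j` either the identity on its domain or with range
disjoint from its domain. -/
theorem stmt_2 {X : Type*} (E : Set (X × X)) (M : ℕ)
    (hbg : ∀ x : X, ({y | (x, y) ∈ E ∪ relInv E}).Finite ∧
      ({y | (x, y) ∈ E ∪ relInv E}).ncard ≤ M)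
    (A B : Set X) (t : X → X) (hbij : Set.BijOn t A B)
    (n : ℕ) (hn : 1 ≤ n)
    (hgraph : {p : X × X | ∃ x ∈ A, p = (t x, x)} ⊆ relPow E n) :
    ∃ (m : ℕ), 1 ≤ m ∧ ∃ As : Fin m → Set X,
      (∀ i j, i ≠ j → Disjoint (As i) (As j)) ∧ (⋃ i, As i) = A ∧
      ∀ i, ∃ (D : Fin (n + 1) → Set X) (s : Fin n → X → X),
        D 0 = As i ∧
        (∀ j : Fin n, Set.InjOn (s j) (D j.castSucc)) ∧
        (∀ j : Fin n, s j '' D j.castSucc = D j.succ) ∧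
        (∀ j : Fin n, ∀ x ∈ D j.castSucc, (s j x, x) ∈ E) ∧
        (∀ x ∈ As i, ∃ y : Fin (n + 1) → X, y 0 = x ∧ y (Fin.last n) = t x ∧
          ∀ j : Fin n, y j.succ = s j (y j.castSucc)) ∧
        (∀ j : Fin n, (∀ x ∈ D j.castSucc, s j x = x) ∨
          Disjoint (s j '' D j.castSucc) (D j.castSucc)) := by
  classical
  have hpath : ∀ x ∈ A, ∃ q : ℕ → X, q 0 = x ∧ q n = t x ∧ ∀ k < n, (q (k+1), q k) ∈ E :=
    fun x hx => Stmt2Aux.relPow_path (hgraph ⟨x, hx, rfl⟩)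
  set p : X → ℕ → X := fun x => if hx : x ∈ A then (hpath x hx).choose else fun _ => x
    with hpdef
  have hp0 : ∀ x ∈ A, p x 0 = x := by
    intro x hx; simp only [hpdef, dif_pos hx]; exact (hpath x hx).choose_spec.1
  have hpn : ∀ x ∈ A, p x n = t x := by
    intro x hx; simp only [hpdef, dif_pos hx]; exact (hpath x hx).choose_spec.2.1
  have hpstep : ∀ x ∈ A, ∀ k < n, (p x (k+1), p x k) ∈ E := by
    intro x hx; simp only [hpdef, dif_pos hx]; exact (hpath x hx).choose_spec.2.2
  have hball : ∀ x ∈ A, ∀ j ≤ n, p x j ∈ Stmt2Aux.ball E n x := by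
    intro x hx
    have key : ∀ j, j ≤ n → p x j ∈ Stmt2Aux.ball E j x := by
      intro j
      induction j with
      | zero => intro _; rw [hp0 x hx]; exact Stmt2Aux.mem_ball_self E 0 x
      | succ j ih =>
        intro hj
        have h1 : p x j ∈ Stmt2Aux.ball E j x := ih (by omega)
        have h2 : p x (j+1) ∈ Stmt2Aux.nbr E (p x j) := Or.inr (hpstep x hx j (by omega))
        exact Stmt2Aux.mem_ball_step h1 h2
    intro j hj
    exact Stmt2Aux.ball_mono E hj x (key j hj)
  set K := (M+1)^(2*n) with hK
  set N : X → Set X := fun x =>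
    {x' | x ∈ A ∧ x' ∈ A ∧ x' ≠ x ∧ ∃ j ≤ n, ∃ k ≤ n, p x j = p x' k} with hN
  have hNsub : ∀ x, N x ⊆ Stmt2Aux.ball E (2*n) x := by
    intro x x' hx'
    obtain ⟨hxA, hx'A, _, j, hj, k, hk, heq⟩ := hx'
    have h1 : p x' k ∈ Stmt2Aux.ball E n x' := hball x' hx'A k hk
    have h2 : x' ∈ Stmt2Aux.ball E n (p x j) := heq ▸ Stmt2Aux.ball_symm h1
    have h3 := Stmt2Aux.ball_trans (hball x hxA j hj) h2
    rwa [two_mul]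
  have hNfin : ∀ x, (N x).Finite :=
    fun x => ((Stmt2Aux.ball_finite_card hbg (2*n) x).1).subset (hNsub x)
  have hNcard : ∀ x, (N x).ncard ≤ K := fun x =>
    le_trans (Set.ncard_le_ncard (hNsub x) (Stmt2Aux.ball_finite_card hbg (2*n) x).1)
      (Stmt2Aux.ball_finite_card hbg (2*n) x).2
  have hNsym : ∀ x y, y ∈ N x → x ∈ N y := by
    rintro x y ⟨h1, h2, h3, j, hj, k, hk, heq⟩
    exact ⟨h2, h1, fun he => h3 he.symm, k, hk, j, hj, heq.symm⟩
  obtain ⟨c, hcol⟩ := Stmt2Aux.exists_coloring K N hNsym hNfin hNcard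
  have hsep : ∀ x ∈ A, ∀ x' ∈ A, c x = c x' →
      ∀ j ≤ n, ∀ k ≤ n, p x j = p x' k → x = x' := by
    intro x hx x' hx' hcc j hj k hk heq
    by_contra hne
    exact hcol x x' ⟨hx, hx', fun h => hne h.symm, j, hj, k, hk, heq⟩ hne hcc
  set g : X → Fin (K+1) × (Fin n → Bool) :=
    fun x => (c x, fun j => decide (p x ((j:ℕ)+1) = p x (j:ℕ))) with hg
  set m := Fintype.card (Fin (K+1) × (Fin n → Bool)) with hm
  set e : (Fin (K+1) × (Fin n → Bool)) ≃ Fin m := Fintype.equivFin _ with he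
  refine ⟨m, ?_, fun i => {x | x ∈ A ∧ e (g x) = i}, ?_, ?_, ?_⟩
  · have : Nonempty (Fin (K+1) × (Fin n → Bool)) := ⟨(0, fun _ => false)⟩
    exact Fintype.card_pos
  · intro i j hij
    rw [Set.disjoint_left]
    rintro x ⟨_, hxi⟩ ⟨_, hxj⟩
    exact hij (hxi ▸ hxj)
  · ext x
    simp only [Set.mem_iUnion, Set.mem_setOf_eq]
    exact ⟨fun ⟨i, hx, _⟩ => hx, fun hx => ⟨e (g x), hx, rfl⟩⟩
  · intro i
    set S : Set X := {x | x ∈ A ∧ e (g x) = i} with hS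
    have hSA : S ⊆ A := fun x hx => hx.1
    have hgS : ∀ x ∈ S, ∀ x' ∈ S, g x = g x' := by
      intro x hx x' hx'
      apply e.injective
      rw [hx.2, hx'.2]
    have hsepS : ∀ x ∈ S, ∀ x' ∈ S, ∀ j ≤ n, ∀ k ≤ n, p x j = p x' k → x = x' := by
      intro x hx x' hx' j hj k hk heq
      exact hsep x (hSA hx) x' (hSA hx') (congrArg Prod.fst (hgS x hx x' hx')) j hj k hk heq
    set D : Fin (n+1) → Set X := fun j => (fun x => p x (j:ℕ)) '' S with hD
    set s : Fin n → X → X :=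
      fun j z => if h : ∃ x, x ∈ S ∧ p x (j:ℕ) = z then p h.choose ((j:ℕ)+1) else z with hsdef
    have hjn : ∀ j : Fin n, (j:ℕ) ≤ n := fun j => le_of_lt j.isLt
    have hjn1 : ∀ j : Fin n, (j:ℕ)+1 ≤ n := fun j => j.isLt
    have hs : ∀ (j : Fin n), ∀ x ∈ S, s j (p x (j:ℕ)) = p x ((j:ℕ)+1) := by
      intro j x hx
      have hex : ∃ x', x' ∈ S ∧ p x' (j:ℕ) = p x (j:ℕ) := ⟨x, hx, rfl⟩
      have hch := hex.choose_spec
      have hxx : hex.choose = x :=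
        hsepS _ hch.1 x hx (j:ℕ) (hjn j) (j:ℕ) (hjn j) hch.2
      simp only [hsdef, dif_pos hex]
      rw [hxx]
    have htype : ∀ (j : Fin n), ∀ x ∈ S, ∀ x' ∈ S,
        (p x ((j:ℕ)+1) = p x (j:ℕ)) ↔ (p x' ((j:ℕ)+1) = p x' (j:ℕ)) := by
      intro j x hx x' hx'
      have h := congrArg (fun q => q.2 j) (hgS x hx x' hx')
      simpa [hg] using h
    refine ⟨D, s, ?_, ?_, ?_, ?_, ?_, ?_⟩
    · ext z
      simp only [hD, Set.mem_image]
      constructor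
      · rintro ⟨x, hx, rfl⟩
        have : p x ((0 : Fin (n+1)) : ℕ) = x := hp0 x (hSA hx)
        rwa [this]
      · intro hz
        exact ⟨z, hz, hp0 z (hSA hz)⟩
    · intro j z hz z' hz' heq
      simp only [hD, Set.mem_image] at hz hz'
      obtain ⟨x, hx, rfl⟩ := hz
      obtain ⟨x', hx', rfl⟩ := hz'
      have heq' : p x ((j:ℕ)+1) = p x' ((j:ℕ)+1) := by
        calc p x ((j:ℕ)+1) = s j (p x (j:ℕ)) := (hs j x hx).symm
          _ = s j (p x' (j:ℕ)) := heq
          _ = p x' ((j:ℕ)+1) := hs j x' hx'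
      have hxx : x = x' := hsepS x hx x' hx' ((j:ℕ)+1) (hjn1 j) ((j:ℕ)+1) (hjn1 j) heq'
      rw [hxx]
    · intro j
      have h1 : s j '' (D j.castSucc) = (fun x => s j (p x (j:ℕ))) '' S := by
        simp only [hD, Set.image_image]
        rfl
      rw [h1]
      simp only [hD]
      exact Set.image_congr fun x hx => hs j x hx
    · intro j x hx
      simp only [hD, Set.mem_image] at hx
      obtain ⟨x₀, hx₀, rfl⟩ := hx
      show (s j (p x₀ (j:ℕ)), p x₀ (j:ℕ)) ∈ E
      rw [hs j x₀ hx₀]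
      exact hpstep x₀ (hSA hx₀) (j:ℕ) j.isLt
    · intro x hx
      refine ⟨fun j => p x (j:ℕ), hp0 x (hSA hx), hpn x (hSA hx), ?_⟩
      intro j
      exact (hs j x hx).symm
    · intro j
      rcases Set.eq_empty_or_nonempty S with hSe | ⟨x₀, hx₀⟩
      · left
        intro z hz
        simp only [hD, hSe, Set.image_empty] at hz
        exact absurd hz (Set.notMem_empty z)
      · by_cases hid : p x₀ ((j:ℕ)+1) = p x₀ (j:ℕ)
        · left
          intro z hz
          simp only [hD, Set.mem_image] at hz
          obtain ⟨x, hx, rfl⟩ := hz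
          show s j (p x (j:ℕ)) = p x (j:ℕ)
          rw [hs j x hx]
          exact (htype j x hx x₀ hx₀).mpr hid
        · right
          rw [Set.disjoint_left]
          rintro z hz1 hz2
          simp only [hD, Set.mem_image] at hz1 hz2
          obtain ⟨w, ⟨x, hx, rfl⟩, rfl⟩ := hz1
          obtain ⟨x', hx', hzx'⟩ := hz2
          have hzx'' : p x' (j:ℕ) = p x ((j:ℕ)+1) := hzx'.trans (hs j x hx)
          have hxx : x' = x :=
            hsepS x' hx' x hx (j:ℕ) (hjn j) ((j:ℕ)+1) (hjn1 j) hzx''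
          subst hxx
          exact hid ((htype j x' hx' x₀ hx₀).mp hzx''.symm)
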